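/- Let (Q,·) be a commutative idempotent quasigroup of odd order v ≥ 3 and let V = Q × Z_3. Define triples P = {{(x,0),(x,1),(x,2)} : x ∈ Q} and S = {{(x,i),(y,i),(x·y, i+1)} : x,y ∈ Q, x ≠ y, i ∈ Z_3} (with second coordinates mod 3). Then (V, P ∪ S) is a Steiner triple system of order 3v: every pair of distinct points of V lies in exactly one triple. -/

import Mathlib

/-- The family of triples of the Bose construction on `Q × ZMod 3`:
the "point" triples {(x,0),(x,1),(x,2)} and the "quasigroup" triples
{(x,i),(y,i),(x·y,i+1)} for x ≠ y. -/
def BoseTriples {Q : Type} [DecidableEq Q] (mul : Q → Q → Q) (t : Finset (Q × ZMod 3)) : Prop :=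
  (∃ x : Q, t = {(x, 0), (x, 1), (x, 2)}) ∨
  (∃ (x y : Q) (i : ZMod 3), x ≠ y ∧ t = {(x, i), (y, i), (mul x y, i + 1)})

set_option linter.unusedSectionVars false

section Helpers
variable {Q : Type} [DecidableEq Q] (mul : Q → Q → Q)

lemma zmod3_cases : ∀ k : ZMod 3, k = 0 ∨ k = 1 ∨ k = 2 := by decide

lemma zmod3_ne1 : ∀ k : ZMod 3, k ≠ k + 1 := by decide
lemma zmod3_tri : ∀ i j : ZMod 3, i ≠ j → j ≠ i + 1 → i = j + 1 := by decide
lemma zmod3_ne2 : ∀ k : ZMod 3, k ≠ k + 2 := by decide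

variable (hcomm : ∀ x y : Q, mul x y = mul y x)
    (hidem : ∀ x : Q, mul x x = x)
    (hquasi : ∀ a b : Q, ∃! x : Q, mul a x = b)

include hidem hquasi in
lemma bose_mul_ne_left {x y : Q} (h : x ≠ y) : mul x y ≠ x := by
  intro he
  exact h ((hquasi x x).unique he (hidem x)).symm

include hcomm hidem hquasi in
lemma bose_mul_ne_right {x y : Q} (h : x ≠ y) : mul x y ≠ y := by
  intro he
  rw [hcomm] at he
  exact h ((hquasi y y).unique he (hidem y))

end Helpers

set_option linter.unusedSectionVars false

section Main
variable {Q : Type} [DecidableEq Q] (mul : Q → Q → Q)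
variable (hcomm : ∀ x y : Q, mul x y = mul y x)
    (hidem : ∀ x : Q, mul x x = x)
    (hquasi : ∀ a b : Q, ∃! x : Q, mul a x = b)

include hcomm hidem hquasi in
lemma bose_point {x : Q} {i j : ZMod 3} (hij : i ≠ j) :
    ∃! t : Finset (Q × ZMod 3), BoseTriples mul t ∧ (x, i) ∈ t ∧ (x, j) ∈ t := by
  refine ⟨{(x, 0), (x, 1), (x, 2)}, ⟨Or.inl ⟨x, rfl⟩, ?_, ?_⟩, ?_⟩
  · rcases zmod3_cases i with h | h | h <;> simp [h]
  · rcases zmod3_cases j with h | h | h <;> simp [h]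
  · rintro t ⟨ht, hxt, hyt⟩
    rcases ht with ⟨a, rfl⟩ | ⟨a, b, k, hab, rfl⟩
    · have hx : x = a := by
        simp only [Finset.mem_insert, Finset.mem_singleton, Prod.mk.injEq] at hxt
        rcases hxt with ⟨h, _⟩ | ⟨h, _⟩ | ⟨h, _⟩ <;> exact h
      subst hx; rfl
    · exfalso
      simp only [Finset.mem_insert, Finset.mem_singleton, Prod.mk.injEq] at hxt hyt
      rcases hxt with ⟨rfl, rfl⟩ | ⟨rfl, rfl⟩ | ⟨hx, rfl⟩ <;>
        rcases hyt with ⟨h1, h2⟩ | ⟨h1, h2⟩ | ⟨h1, h2⟩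
      · exact hij h2.symm
      · exact hab h1
      · exact bose_mul_ne_left mul hidem hquasi hab h1.symm
      · exact hab h1.symm
      · exact hij h2.symm
      · exact bose_mul_ne_right mul hcomm hidem hquasi hab h1.symm
      · exact bose_mul_ne_left mul hidem hquasi hab (hx.symm.trans h1)
      · exact bose_mul_ne_right mul hcomm hidem hquasi hab (hx.symm.trans h1)
      · exact hij h2.symm

include hcomm hidem hquasi in
lemma bose_same {x y : Q} (hxy : x ≠ y) (i : ZMod 3) :
    ∃! t : Finset (Q × ZMod 3), BoseTriples mul t ∧ (x, i) ∈ t ∧ (y, i) ∈ t := by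
  refine ⟨{(x, i), (y, i), (mul x y, i + 1)}, ⟨Or.inr ⟨x, y, i, hxy, rfl⟩, by simp, by simp⟩, ?_⟩
  rintro t ⟨ht, hxt, hyt⟩
  rcases ht with ⟨a, rfl⟩ | ⟨a, b, k, hab, rfl⟩
  · exfalso
    have hx : x = a := by
      simp only [Finset.mem_insert, Finset.mem_singleton, Prod.mk.injEq] at hxt
      rcases hxt with ⟨h, _⟩ | ⟨h, _⟩ | ⟨h, _⟩ <;> exact h
    have hy : y = a := by
      simp only [Finset.mem_insert, Finset.mem_singleton, Prod.mk.injEq] at hyt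
      rcases hyt with ⟨h, _⟩ | ⟨h, _⟩ | ⟨h, _⟩ <;> exact h
    exact hxy (hx.trans hy.symm)
  · simp only [Finset.mem_insert, Finset.mem_singleton, Prod.mk.injEq] at hxt hyt
    rcases hxt with ⟨rfl, rfl⟩ | ⟨rfl, rfl⟩ | ⟨hx, hk⟩ <;>
      rcases hyt with ⟨h1, h2⟩ | ⟨h1, h2⟩ | ⟨h1, h2⟩
    · exact absurd h1.symm hxy
    · subst h1; rfl
    · exact absurd h2 (zmod3_ne1 _)
    · subst h1
      rw [hcomm y x]
      ext p
      simp only [Finset.mem_insert, Finset.mem_singleton]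
      tauto
    · exact absurd h1.symm hxy
    · exact absurd h2 (zmod3_ne1 _)
    · exact absurd (h2.symm.trans hk) (zmod3_ne1 _)
    · exact absurd (h2.symm.trans hk) (zmod3_ne1 _)
    · exact absurd (hx.trans h1.symm) hxy

include hcomm hidem hquasi in
lemma bose_adj {x y : Q} (hxy : x ≠ y) (i : ZMod 3) :
    ∃! t : Finset (Q × ZMod 3), BoseTriples mul t ∧ (x, i) ∈ t ∧ (y, i + 1) ∈ t := by
  obtain ⟨s, hs, hsu⟩ := hquasi x y
  have hxs : x ≠ s := by
    intro h
    apply hxy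
    rw [← hs, ← h, hidem]
  refine ⟨{(x, i), (s, i), (y, i + 1)}, ⟨Or.inr ⟨x, s, i, hxs, by rw [hs]⟩, by simp, by simp⟩, ?_⟩
  rintro t ⟨ht, hxt, hyt⟩
  rcases ht with ⟨a, rfl⟩ | ⟨a, b, k, hab, rfl⟩
  · exfalso
    have hx : x = a := by
      simp only [Finset.mem_insert, Finset.mem_singleton, Prod.mk.injEq] at hxt
      rcases hxt with ⟨h, _⟩ | ⟨h, _⟩ | ⟨h, _⟩ <;> exact h
    have hy : y = a := by
      simp only [Finset.mem_insert, Finset.mem_singleton, Prod.mk.injEq] at hyt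
      rcases hyt with ⟨h, _⟩ | ⟨h, _⟩ | ⟨h, _⟩ <;> exact h
    exact hxy (hx.trans hy.symm)
  · simp only [Finset.mem_insert, Finset.mem_singleton, Prod.mk.injEq] at hxt hyt
    rcases hxt with ⟨rfl, rfl⟩ | ⟨rfl, rfl⟩ | ⟨hx, hk⟩ <;>
      rcases hyt with ⟨h1, h2⟩ | ⟨h1, h2⟩ | ⟨h1, h2⟩
    · exact absurd h2.symm (zmod3_ne1 _)
    · exact absurd h2.symm (zmod3_ne1 _)
    · have hb : b = s := hsu b h1.symm
      subst hb; rw [hs]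
    · exact absurd h2.symm (zmod3_ne1 _)
    · exact absurd h2.symm (zmod3_ne1 _)
    · have ha : a = s := hsu a ((hcomm x a).trans h1.symm)
      rw [ha, hcomm s x, hs]
      ext p
      simp only [Finset.mem_insert, Finset.mem_singleton]
      tauto
    · exact absurd (hk.trans (by rw [← h2]; ring)) (zmod3_ne2 i)
    · exact absurd (hk.trans (by rw [← h2]; ring)) (zmod3_ne2 i)
    · exact absurd (hx.trans h1.symm) hxy


end Main


/-- Bose construction: if (Q,·) is a commutative idempotent quasigroup of
odd order v ≥ 3, then the triples P ∪ S on V = Q × Z₃ form a Steiner triple system of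
order 3v: every pair of distinct points lies in exactly one triple. -/
theorem stmt14 (Q : Type) [Fintype Q] [DecidableEq Q] (mul : Q → Q → Q)
    (hcomm : ∀ x y : Q, mul x y = mul y x)
    (hidem : ∀ x : Q, mul x x = x)
    (hquasi : ∀ a b : Q, ∃! x : Q, mul a x = b)
    (hodd : Odd (Fintype.card Q)) (hcard : 3 ≤ Fintype.card Q) :
    ∀ a b : Q × ZMod 3, a ≠ b →
      ∃! t : Finset (Q × ZMod 3), BoseTriples mul t ∧ a ∈ t ∧ b ∈ t := by
  rintro ⟨x, i⟩ ⟨y, j⟩ hab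
  by_cases hxy : x = y
  · subst hxy
    have hij : i ≠ j := fun h => hab (by rw [h])
    exact bose_point mul hcomm hidem hquasi hij
  · by_cases hij : i = j
    · subst hij
      exact bose_same mul hcomm hidem hquasi hxy i
    · by_cases hj : j = i + 1
      · subst hj
        exact bose_adj mul hcomm hidem hquasi hxy i
      · have hi : i = j + 1 := zmod3_tri i j hij hj
        subst hi
        obtain ⟨t, ⟨h1, h2, h3⟩, hu⟩ := bose_adj mul hcomm hidem hquasi (Ne.symm hxy) j
        exact ⟨t, ⟨h1, h3, h2⟩, fun t' ⟨g1, g2, g3⟩ => hu t' ⟨g1, g3, g2⟩⟩
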